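/- Let G be a graph on n vertices and suppose v is simplicial in G or has degree at least n-2 in G. Then G is weakly chordal if and only if G - v is weakly chordal. -/
import Mathlib


/-- `f : ZMod k → V` describes an induced cycle of length `k` in `G`. -/
def IsInducedCycle {V : Type*} (G : SimpleGraph V) (k : ℕ) (f : ZMod k → V) : Prop :=
  Function.Injective f ∧ ∀ i j : ZMod k, G.Adj (f i) (f j) ↔ (j = i + 1 ∨ i = j + 1)

/-- A graph is weakly chordal if neither it nor its complement contains
an induced cycle of length at least 5. -/
def WeaklyChordal {V : Type*} (G : SimpleGraph V) : Prop :=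
  (∀ k : ℕ, 5 ≤ k → ∀ f : ZMod k → V, ¬ IsInducedCycle G k f) ∧
  (∀ k : ℕ, 5 ≤ k → ∀ f : ZMod k → V, ¬ IsInducedCycle Gᶜ k f)

section Aux

variable {V : Type*}

lemma natCast_zmod_ne_zero (k c : ℕ) (hc : 0 < c) (hck : c < k) : (c : ZMod k) ≠ 0 := by
  haveI : NeZero k := ⟨by omega⟩
  rw [Ne, ZMod.natCast_eq_zero_iff]
  intro h
  exact absurd (Nat.le_of_dvd hc h) (by omega)

lemma compl_induce_eq (G : SimpleGraph V) (s : Set V) :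
    (G.induce s)ᶜ = Gᶜ.induce s := by
  ext a b
  simp only [SimpleGraph.compl_adj, SimpleGraph.comap_adj, ne_eq, Subtype.ext_iff]
  tauto

lemma cycle_lift {G : SimpleGraph V} {s : Set V} {k : ℕ} {f : ZMod k → s}
    (h : IsInducedCycle (G.induce s) k f) :
    IsInducedCycle G k (fun i => (f i : V)) := by
  refine ⟨fun i j hij => h.1 (Subtype.ext hij), fun i j => ?_⟩
  rw [← h.2 i j]
  simp [SimpleGraph.comap_adj]

lemma cycle_restrict {G : SimpleGraph V} {s : Set V} {k : ℕ} {f : ZMod k → V}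
    (h : IsInducedCycle G k f) (hs : ∀ i, f i ∈ s) :
    IsInducedCycle (G.induce s) k (fun i => ⟨f i, hs i⟩) := by
  refine ⟨fun i j hij => h.1 (congrArg Subtype.val hij), fun i j => ?_⟩
  rw [← h.2 i j]
  simp [SimpleGraph.comap_adj]

/-- Counting lemma: if `v` has two distinct non-neighbors other than itself, then its
neighbor set has at most `card V - 3` elements. -/
lemma ncard_le_of_two_nonneighbors [Fintype V] (G : SimpleGraph V) (v a b : V)
    (ha : a ≠ v) (hb : b ≠ v) (hab : a ≠ b) (hna : ¬G.Adj v a) (hnb : ¬G.Adj v b) :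
    (G.neighborSet v).ncard ≤ Fintype.card V - 3 := by
  have hsub : G.neighborSet v ⊆ ({v, a, b} : Set V)ᶜ := by
    intro x hx
    simp only [Set.mem_compl_iff, Set.mem_insert_iff, Set.mem_singleton_iff]
    rintro (rfl | rfl | rfl)
    · exact G.irrefl hx
    · exact hna hx
    · exact hnb hx
  have h3 : ({v, a, b} : Set V).ncard = 3 := by
    rw [Set.ncard_insert_of_notMem (by simp [Ne.symm ha, Ne.symm hb]) (Set.toFinite _),
      Set.ncard_insert_of_notMem (by simp [hab]) (Set.toFinite _), Set.ncard_singleton]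
  have hcompl := Set.ncard_add_ncard_compl ({v, a, b} : Set V)
  rw [Nat.card_eq_fintype_card, h3] at hcompl
  calc (G.neighborSet v).ncard ≤ (({v, a, b} : Set V)ᶜ).ncard :=
        Set.ncard_le_ncard hsub (Set.toFinite _)
    _ ≤ Fintype.card V - 3 := by omega

variable {k : ℕ} (h5 : 5 ≤ k)

section NeFacts
include h5

lemma zmod1 : (1 : ZMod k) ≠ 0 := by
  have := natCast_zmod_ne_zero k 1 (by omega) (by omega); exact_mod_cast this
lemma zmod2 : (2 : ZMod k) ≠ 0 := by
  have := natCast_zmod_ne_zero k 2 (by omega) (by omega); exact_mod_cast this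
lemma zmod3 : (3 : ZMod k) ≠ 0 := by
  have := natCast_zmod_ne_zero k 3 (by omega) (by omega); exact_mod_cast this
lemma zmod4 : (4 : ZMod k) ≠ 0 := by
  have := natCast_zmod_ne_zero k 4 (by omega) (by omega); exact_mod_cast this

end NeFacts

include h5

/-- No induced long cycle of `G` passes through a simplicial vertex. -/
lemma no_cycle_simplicial (G : SimpleGraph V) (v : V)
    (hv : G.IsClique (G.neighborSet v)) {f : ZMod k → V}
    (hf : IsInducedCycle G k f) (i₀ : ZMod k) (hi₀ : f i₀ = v) : False := by
  have h1 := zmod1 h5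
  have h2 := zmod2 h5
  have h3 := zmod3 h5
  -- v is adjacent to f (i₀ - 1) and f (i₀ + 1)
  have hA : G.Adj (f i₀) (f (i₀ + 1)) := (hf.2 i₀ (i₀ + 1)).mpr (Or.inl rfl)
  have hB : G.Adj (f i₀) (f (i₀ - 1)) := (hf.2 i₀ (i₀ - 1)).mpr (Or.inr (by ring))
  rw [hi₀] at hA hB
  have hmemA : f (i₀ + 1) ∈ G.neighborSet v := hA
  have hmemB : f (i₀ - 1) ∈ G.neighborSet v := hB
  have hne : f (i₀ - 1) ≠ f (i₀ + 1) := fun h => h2 (by linear_combination -hf.1 h)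
  have hadj : G.Adj (f (i₀ - 1)) (f (i₀ + 1)) := hv hmemB hmemA hne
  rcases (hf.2 (i₀ - 1) (i₀ + 1)).mp hadj with h | h
  · exact h1 (by linear_combination h)
  · exact h3 (by linear_combination -h)

/-- No induced long cycle of `Gᶜ` passes through a simplicial vertex of `G`. -/
lemma no_cycle_compl_simplicial (G : SimpleGraph V) (v : V)
    (hv : G.IsClique (G.neighborSet v)) {f : ZMod k → V}
    (hf : IsInducedCycle Gᶜ k f) (i₀ : ZMod k) (hi₀ : f i₀ = v) : False := by
  have h1 := zmod1 h5
  have h2 := zmod2 h5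
  have h3 := zmod3 h5
  have h4 := zmod4 h5
  -- v is G-adjacent to f (i₀ + 2) and f (i₀ + 3)
  have hA : G.Adj v (f (i₀ + 2)) := by
    have hnc : ¬ Gᶜ.Adj (f i₀) (f (i₀ + 2)) := by
      rw [hf.2]
      rintro (h | h)
      · exact h1 (by linear_combination h)
      · exact h3 (by linear_combination -h)
    have hne : v ≠ f (i₀ + 2) := by
      rw [← hi₀]; exact fun h => h2 (by linear_combination -hf.1 h)
    rw [hi₀] at hnc
    simpa [SimpleGraph.compl_adj, hne] using hnc
  have hB : G.Adj v (f (i₀ + 3)) := by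
    have hnc : ¬ Gᶜ.Adj (f i₀) (f (i₀ + 3)) := by
      rw [hf.2]
      rintro (h | h)
      · exact h2 (by linear_combination h)
      · exact h4 (by linear_combination -h)
    have hne : v ≠ f (i₀ + 3) := by
      rw [← hi₀]; exact fun h => h3 (by linear_combination -hf.1 h)
    rw [hi₀] at hnc
    simpa [SimpleGraph.compl_adj, hne] using hnc
  have hne : f (i₀ + 2) ≠ f (i₀ + 3) := fun h => h1 (by linear_combination -hf.1 h)
  have hadj : G.Adj (f (i₀ + 2)) (f (i₀ + 3)) := hv hA hB hne
  have hcadj : Gᶜ.Adj (f (i₀ + 2)) (f (i₀ + 3)) :=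
    (hf.2 (i₀ + 2) (i₀ + 3)).mpr (Or.inl (by ring))
  exact hcadj.2 hadj

/-- No induced long cycle of `G` passes through a vertex of degree ≥ n - 2. -/
lemma no_cycle_deg [Fintype V] (G : SimpleGraph V) (v : V)
    (hv : Fintype.card V - 2 ≤ (G.neighborSet v).ncard) {f : ZMod k → V}
    (hf : IsInducedCycle G k f) (i₀ : ZMod k) (hi₀ : f i₀ = v) : False := by
  haveI : NeZero k := ⟨by omega⟩
  have h1 := zmod1 h5
  have h2 := zmod2 h5
  have h3 := zmod3 h5
  have h4 := zmod4 h5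
  have hcard : 5 ≤ Fintype.card V := by
    have := Fintype.card_le_of_injective f hf.1
    rw [ZMod.card] at this; omega
  have hna : ¬G.Adj v (f (i₀ + 2)) := by
    rw [← hi₀, hf.2]
    rintro (h | h)
    · exact h1 (by linear_combination h)
    · exact h3 (by linear_combination -h)
  have hnb : ¬G.Adj v (f (i₀ + 3)) := by
    rw [← hi₀, hf.2]
    rintro (h | h)
    · exact h2 (by linear_combination h)
    · exact h4 (by linear_combination -h)
  have ha : f (i₀ + 2) ≠ v := by
    rw [← hi₀]; exact fun h => h2 (by linear_combination hf.1 h)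
  have hb : f (i₀ + 3) ≠ v := by
    rw [← hi₀]; exact fun h => h3 (by linear_combination hf.1 h)
  have hab : f (i₀ + 2) ≠ f (i₀ + 3) := fun h => h1 (by linear_combination -hf.1 h)
  have := ncard_le_of_two_nonneighbors G v _ _ ha hb hab hna hnb
  omega

/-- No induced long cycle of `Gᶜ` passes through a vertex of degree ≥ n - 2 in `G`. -/
lemma no_cycle_compl_deg [Fintype V] (G : SimpleGraph V) (v : V)
    (hv : Fintype.card V - 2 ≤ (G.neighborSet v).ncard) {f : ZMod k → V}
    (hf : IsInducedCycle Gᶜ k f) (i₀ : ZMod k) (hi₀ : f i₀ = v) : False := by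
  haveI : NeZero k := ⟨by omega⟩
  have h1 := zmod1 h5
  have h2 := zmod2 h5
  have hcard : 5 ≤ Fintype.card V := by
    have := Fintype.card_le_of_injective f hf.1
    rw [ZMod.card] at this; omega
  have hA : Gᶜ.Adj v (f (i₀ + 1)) := by
    rw [← hi₀]; exact (hf.2 i₀ (i₀ + 1)).mpr (Or.inl rfl)
  have hB : Gᶜ.Adj v (f (i₀ - 1)) := by
    rw [← hi₀]; exact (hf.2 i₀ (i₀ - 1)).mpr (Or.inr (by ring))
  have hab : f (i₀ + 1) ≠ f (i₀ - 1) := fun h => h2 (by linear_combination hf.1 h)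
  have := ncard_le_of_two_nonneighbors G v _ _ (Ne.symm hA.ne) (Ne.symm hB.ne) hab
    hA.2 hB.2
  omega

end Aux

/-- If `v` is simplicial or adjacent to at least `n - 2` vertices, then `G` is weakly
chordal iff `G - v` is weakly chordal. -/
theorem weaklyChordal_iff_delete_vertex {V : Type*} [Fintype V] (G : SimpleGraph V) (v : V)
    (hv : G.IsClique (G.neighborSet v) ∨ Fintype.card V - 2 ≤ (G.neighborSet v).ncard) :
    WeaklyChordal G ↔ WeaklyChordal (G.induce ({v}ᶜ : Set V)) := by
  constructor
  · intro hG
    refine ⟨fun k hk f hf => hG.1 k hk _ (cycle_lift hf), fun k hk f hf => ?_⟩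
    rw [compl_induce_eq] at hf
    exact hG.2 k hk _ (cycle_lift hf)
  · intro hG'
    constructor
    · intro k hk f hf
      by_cases hvr : ∃ i, f i = v
      · obtain ⟨i₀, hi₀⟩ := hvr
        rcases hv with h | h
        · exact no_cycle_simplicial hk G v h hf i₀ hi₀
        · exact no_cycle_deg hk G v h hf i₀ hi₀
      · push_neg at hvr
        exact hG'.1 k hk _ (cycle_restrict hf (fun i => by simpa using hvr i))
    · intro k hk f hf
      by_cases hvr : ∃ i, f i = v
      · obtain ⟨i₀, hi₀⟩ := hvr
        rcases hv with h | h
        · exact no_cycle_compl_simplicial hk G v h hf i₀ hi₀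
        · exact no_cycle_compl_deg hk G v h hf i₀ hi₀
      · push_neg at hvr
        have := cycle_restrict hf (fun i => by simpa using hvr i : ∀ i, f i ∈ ({v}ᶜ : Set V))
        rw [← compl_induce_eq] at this
        exact hG'.2 k hk _ this
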